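/- If p is a smooth function satisfying the advected wave equation ∂²p/∂t² + 2u₀ ∂²p/∂x∂t + u₀² ∂²p/∂x² − c₀²(∂²p/∂x² + ∂²p/∂y²) = 0, and p'(x', y', t') = p(x, y, t) under the Lorentz transform x' = x/√(1−M₀²), y' = y, t' = t + M₀ x/(c₀(1−M₀²)), then p' satisfies the standard wave equation with modified celerity: ∂²p'/∂t'² − c₀²(1−M₀²)(∂²p'/∂x'² + ∂²p'/∂y'²) = 0. -/

import Mathlib

noncomputable def pdx (f : ℝ → ℝ → ℝ → ℝ) (x y t : ℝ) : ℝ := deriv (fun s => f s y t) x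
noncomputable def pdy (f : ℝ → ℝ → ℝ → ℝ) (x y t : ℝ) : ℝ := deriv (fun s => f x s t) y
noncomputable def pdt (f : ℝ → ℝ → ℝ → ℝ) (x y t : ℝ) : ℝ := deriv (fun s => f x y s) t

lemma walg (u c k m A B C D : ℝ) (hc : c ≠ 0) (hk : k ≠ 0) (he : 1 - (u/c)^2 ≠ 0)
    (hm : m = (u/c) / (c * (1 - (u/c)^2))) (hk2 : k^2 = 1 - (u/c)^2)
    (hw : C + 2*u*(1/k*B + m*C) + u^2*(1/k*(1/k*A + m*B) + m*(1/k*B + m*C))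
      - c^2*(1/k*(1/k*A + m*B) + m*(1/k*B + m*C) + D) = 0) :
    C - c^2*(1-(u/c)^2)*(A+D) = 0 := by
  have hd : c^2 - u^2 ≠ 0 := by
    intro h
    apply he
    field_simp
    linarith
  have R1 : m * (c^2 - u^2) = u := by
    rw [hm]
    field_simp
  have hkc : k^2 * c^2 = c^2 - u^2 := by
    rw [hk2]
    field_simp
  have R2 : (1/k)^2 * (c^2 - u^2) = c^2 := by
    rw [← hkc]
    field_simp
  have hbig : c^2 * (C - (c^2 - u^2)*(A+D)) = 0 := by
    linear_combination (c^2-u^2)*hw + (C*(m*(c^2-u^2)-u) + 2*(1/k)*(c^2-u^2)*B)*R1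
      + ((c^2-u^2)*A)*R2
  have h0 : C - (c^2 - u^2)*(A+D) = 0 := by
    rcases mul_eq_zero.1 hbig with h | h
    · exact absurd h (pow_ne_zero 2 hc)
    · exact h
  field_simp
  linear_combination h0

theorem lorentz_transform_wave_equation (c₀ u₀ M₀ : ℝ)
    (hc : 0 < c₀) (huc : |u₀| < c₀) (hM : M₀ = u₀ / c₀)
    (p p' : ℝ → ℝ → ℝ → ℝ)
    (hp : ContDiff ℝ 2 (fun v : ℝ × ℝ × ℝ => p v.1 v.2.1 v.2.2))
    (hp' : ContDiff ℝ 2 (fun v : ℝ × ℝ × ℝ => p' v.1 v.2.1 v.2.2))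
    (hrel : ∀ x y t : ℝ,
      p' (x / Real.sqrt (1 - M₀ ^ 2)) y (t + M₀ * x / (c₀ * (1 - M₀ ^ 2))) = p x y t)
    (hwave : ∀ x y t : ℝ,
      pdt (pdt p) x y t + 2 * u₀ * pdx (pdt p) x y t + u₀ ^ 2 * pdx (pdx p) x y t
        - c₀ ^ 2 * (pdx (pdx p) x y t + pdy (pdy p) x y t) = 0) :
    ∀ x' y' t' : ℝ,
      pdt (pdt p') x' y' t'
        - c₀ ^ 2 * (1 - M₀ ^ 2) * (pdx (pdx p') x' y' t' + pdy (pdy p') x' y' t') = 0 := by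
  intro x' y' t'
  have hc0 : c₀ ≠ 0 := ne_of_gt hc
  have hM1 : M₀ ^ 2 < 1 := by
    have h1 : |M₀| < 1 := by
      rw [hM, abs_div, abs_of_pos hc]
      exact (div_lt_one hc).2 huc
    nlinarith [abs_nonneg M₀, sq_abs M₀]
  have h1M : (0:ℝ) < 1 - M₀ ^ 2 := by linarith
  set k := Real.sqrt (1 - M₀ ^ 2) with hk_def
  have hk2 : k ^ 2 = 1 - M₀ ^ 2 := Real.sq_sqrt h1M.le
  have hkpos : 0 < k := Real.sqrt_pos.2 h1M
  have hk : k ≠ 0 := ne_of_gt hkpos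
  set m := M₀ / (c₀ * (1 - M₀ ^ 2)) with hm_def
  set F : ℝ × ℝ × ℝ → ℝ := fun v => p' v.1 v.2.1 v.2.2 with hF_def
  have hFd : Differentiable ℝ F := hp'.differentiable (by norm_num)
  have hf1c : ContDiff ℝ 1 (fderiv ℝ F) := hp'.fderiv_right (by norm_num)
  have hf1d : Differentiable ℝ (fderiv ℝ F) := hf1c.differentiable (by norm_num)
  set f1 := fderiv ℝ F with hf1_def
  set f2 := fderiv ℝ f1 with hf2_def
  -- directional derivative lemmas
  have key1 : ∀ (γ : ℝ → ℝ × ℝ × ℝ) (x : ℝ) (u : ℝ × ℝ × ℝ), HasDerivAt γ u x →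
      HasDerivAt (fun s => F (γ s)) (f1 (γ x) u) x := by
    intro γ x u hγ
    exact ((hFd (γ x)).hasFDerivAt).comp_hasDerivAt x hγ
  have key2 : ∀ (γ : ℝ → ℝ × ℝ × ℝ) (x : ℝ) (u w : ℝ × ℝ × ℝ), HasDerivAt γ u x →
      HasDerivAt (fun s => f1 (γ s) w) (f2 (γ x) u w) x := by
    intro γ x u w hγ
    have houter : HasFDerivAt (fun v => f1 v w)
        ((ContinuousLinearMap.apply ℝ ℝ w).comp (f2 (γ x))) (γ x) := by
      exact (ContinuousLinearMap.apply ℝ ℝ w).hasFDerivAt.comp (γ x) (hf1d (γ x)).hasFDerivAt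
    have h := houter.comp_hasDerivAt x hγ
    exact h
  -- curves
  have curve3 : ∀ (x y t : ℝ), HasDerivAt (fun s : ℝ => ((x:ℝ), (y:ℝ), s)) ((0:ℝ),(0:ℝ),(1:ℝ)) t :=
    fun x y t => (hasDerivAt_const t x).prodMk ((hasDerivAt_const t y).prodMk (hasDerivAt_id t))
  have curve2 : ∀ (x y t : ℝ), HasDerivAt (fun s : ℝ => ((x:ℝ), s, (t:ℝ))) ((0:ℝ),(1:ℝ),(0:ℝ)) y :=
    fun x y t => (hasDerivAt_const y x).prodMk ((hasDerivAt_id y).prodMk (hasDerivAt_const y t))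
  have curve1 : ∀ (x y t : ℝ), HasDerivAt (fun s : ℝ => (s, (y:ℝ), (t:ℝ))) ((1:ℝ),(0:ℝ),(0:ℝ)) x :=
    fun x y t => (hasDerivAt_id x).prodMk ((hasDerivAt_const x y).prodMk (hasDerivAt_const x t))
  have curveL : ∀ (x y t : ℝ), HasDerivAt (fun s : ℝ => (s / k, (y:ℝ), t + m * s)) (1/k, (0:ℝ), m) x := by
    intro x y t
    refine HasDerivAt.prodMk ?_ (HasDerivAt.prodMk (hasDerivAt_const x y) ?_)
    · simpa using (hasDerivAt_id x).div_const k
    · simpa using ((hasDerivAt_id x).const_mul m).const_add t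
  have curveT : ∀ (x y t : ℝ), HasDerivAt (fun s : ℝ => ((x / k : ℝ), (y:ℝ), s + m * x)) ((0:ℝ),(0:ℝ),(1:ℝ)) t := by
    intro x y t
    exact (hasDerivAt_const t (x/k)).prodMk ((hasDerivAt_const t y).prodMk
      (by simpa using (hasDerivAt_id t).add_const (m * x)))
  have curveY : ∀ (x y t : ℝ), HasDerivAt (fun s : ℝ => ((x / k : ℝ), s, (t + m * x : ℝ))) ((0:ℝ),(1:ℝ),(0:ℝ)) y := by
    intro x y t
    exact (hasDerivAt_const y (x/k)).prodMk ((hasDerivAt_id y).prodMk (hasDerivAt_const y (t + m*x)))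
  -- first partials of p'
  have hpdt' : ∀ x y t : ℝ, pdt p' x y t = f1 (x, y, t) (0,0,1) := by
    intro x y t
    exact (key1 _ t _ (curve3 x y t)).deriv
  have hpdx' : ∀ x y t : ℝ, pdx p' x y t = f1 (x, y, t) (1,0,0) := by
    intro x y t
    exact (key1 _ x _ (curve1 x y t)).deriv
  have hpdy' : ∀ x y t : ℝ, pdy p' x y t = f1 (x, y, t) (0,1,0) := by
    intro x y t
    exact (key1 _ y _ (curve2 x y t)).deriv
  -- second partials of p' at (x',y',t')
  have h33 : pdt (pdt p') x' y' t' = f2 (x', y', t') (0,0,1) (0,0,1) := by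
    have h := (key2 _ t' _ ((0:ℝ),(0:ℝ),(1:ℝ)) (curve3 x' y' t')).deriv
    unfold pdt
    rw [show (fun s : ℝ => deriv (fun r => p' x' y' r) s)
        = fun s : ℝ => f1 ((x':ℝ), (y':ℝ), s) (0,0,1) from funext fun s => hpdt' x' y' s]
    exact h
  have h11 : pdx (pdx p') x' y' t' = f2 (x', y', t') (1,0,0) (1,0,0) := by
    have h := (key2 _ x' _ ((1:ℝ),(0:ℝ),(0:ℝ)) (curve1 x' y' t')).deriv
    unfold pdx
    rw [show (fun s : ℝ => deriv (fun r => p' r y' t') s)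
        = fun s : ℝ => f1 (s, (y':ℝ), (t':ℝ)) (1,0,0) from funext fun s => hpdx' s y' t']
    exact h
  have h22 : pdy (pdy p') x' y' t' = f2 (x', y', t') (0,1,0) (0,1,0) := by
    have h := (key2 _ y' _ ((0:ℝ),(1:ℝ),(0:ℝ)) (curve2 x' y' t')).deriv
    unfold pdy
    rw [show (fun s : ℝ => deriv (fun r => p' x' r t') s)
        = fun s : ℝ => f1 ((x':ℝ), s, (t':ℝ)) (0,1,0) from funext fun s => hpdy' x' s t']
    exact h
  -- p in terms of F
  have hpeq : ∀ x y t : ℝ, p x y t = F (x / k, y, t + m * x) := by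
    intro x y t
    rw [← hrel x y t, hm_def]
    have : M₀ / (c₀ * (1 - M₀ ^ 2)) * x = M₀ * x / (c₀ * (1 - M₀ ^ 2)) := by ring
    rw [this]
  -- first partials of p
  have hpdtP : ∀ x y t : ℝ, pdt p x y t = f1 (x / k, y, t + m * x) (0,0,1) := by
    intro x y t
    unfold pdt
    rw [show (fun s : ℝ => p x y s) = fun s : ℝ => F (x / k, y, s + m * x) from
      funext fun s => hpeq x y s]
    exact (key1 _ t _ (curveT x y t)).deriv
  have hpdxP : ∀ x y t : ℝ, pdx p x y t = f1 (x / k, y, t + m * x) (1/k, 0, m) := by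
    intro x y t
    unfold pdx
    rw [show (fun s : ℝ => p s y t) = fun s : ℝ => F (s / k, y, t + m * s) from
      funext fun s => hpeq s y t]
    exact (key1 _ x _ (curveL x y t)).deriv
  have hpdyP : ∀ x y t : ℝ, pdy p x y t = f1 (x / k, y, t + m * x) (0,1,0) := by
    intro x y t
    unfold pdy
    rw [show (fun s : ℝ => p x s t) = fun s : ℝ => F (x / k, s, t + m * x) from
      funext fun s => hpeq x s t]
    have hγ : HasDerivAt (fun s : ℝ => ((x / k : ℝ), s, (t + m * x : ℝ))) ((0:ℝ),(1:ℝ),(0:ℝ)) y :=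
      (hasDerivAt_const y (x/k)).prodMk ((hasDerivAt_id y).prodMk (hasDerivAt_const y (t + m*x)))
    exact (key1 _ y _ hγ).deriv
  -- the point where we evaluate the p-wave equation
  set x₀ := k * x' with hx0
  set t₀ := t' - m * x₀ with ht0
  have hX1 : x₀ / k = x' := by rw [hx0]; field_simp
  have hX3 : t₀ + m * x₀ = t' := by ring
  -- second partials of p at (x₀, y', t₀)
  have H33 : pdt (pdt p) x₀ y' t₀ = f2 (x', y', t') (0,0,1) (0,0,1) := by
    have h := (key2 _ t₀ _ ((0:ℝ),(0:ℝ),(1:ℝ)) (curveT x₀ y' t₀)).deriv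
    unfold pdt
    rw [show (fun s : ℝ => deriv (fun r => p x₀ y' r) s)
        = fun s : ℝ => f1 ((x₀ / k : ℝ), (y':ℝ), s + m * x₀) (0,0,1) from
      funext fun s => hpdtP x₀ y' s]
    simp only [hX1, hX3] at h ⊢
    exact h
  have H13 : pdx (pdt p) x₀ y' t₀ = f2 (x', y', t') (1/k, 0, m) (0,0,1) := by
    have h := (key2 _ x₀ ((1/k : ℝ),(0:ℝ),(m:ℝ)) ((0:ℝ),(0:ℝ),(1:ℝ)) (curveL x₀ y' t₀)).deriv
    unfold pdx pdt
    rw [show (fun s : ℝ => deriv (fun r => p s y' r) t₀)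
        = fun s : ℝ => f1 ((s / k : ℝ), (y':ℝ), t₀ + m * s) (0,0,1) from
      funext fun s => hpdtP s y' t₀]
    simp only [hX1, hX3] at h ⊢
    exact h
  have H11 : pdx (pdx p) x₀ y' t₀ = f2 (x', y', t') (1/k, 0, m) (1/k, 0, m) := by
    have h := (key2 _ x₀ ((1/k : ℝ),(0:ℝ),(m:ℝ)) ((1/k : ℝ),(0:ℝ),(m:ℝ)) (curveL x₀ y' t₀)).deriv
    unfold pdx
    rw [show (fun s : ℝ => deriv (fun r => p r y' t₀) s)
        = fun s : ℝ => f1 ((s / k : ℝ), (y':ℝ), t₀ + m * s) (1/k, 0, m) from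
      funext fun s => hpdxP s y' t₀]
    simp only [hX1, hX3] at h ⊢
    exact h
  have H22 : pdy (pdy p) x₀ y' t₀ = f2 (x', y', t') (0,1,0) (0,1,0) := by
    have h := (key2 _ y' ((0:ℝ),(1:ℝ),(0:ℝ)) ((0:ℝ),(1:ℝ),(0:ℝ)) (curveY x₀ y' t₀)).deriv
    unfold pdy
    rw [show (fun s : ℝ => deriv (fun r => p x₀ r t₀) s)
        = fun s : ℝ => f1 ((x₀ / k : ℝ), s, (t₀ + m * x₀ : ℝ)) (0,1,0) from
      funext fun s => hpdyP x₀ s t₀]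
    simp only [hX1, hX3] at h ⊢
    exact h
  -- abbreviations
  set X : ℝ × ℝ × ℝ := (x', y', t') with hX_def
  set A := f2 X (1,0,0) (1,0,0) with hA
  set B := f2 X (1,0,0) (0,0,1) with hB
  set B' := f2 X (0,0,1) (1,0,0) with hB'
  set C := f2 X (0,0,1) (0,0,1) with hC
  set D := f2 X (0,1,0) (0,1,0) with hD
  have hsymm : B = B' :=
    second_derivative_symmetric (fun v => (hFd v).hasFDerivAt) (hf1d X).hasFDerivAt _ _
  -- expand bilinearity
  have hdir : ((1/k, 0, m) : ℝ × ℝ × ℝ)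
      = (1/k) • ((1:ℝ),(0:ℝ),(0:ℝ)) + m • ((0:ℝ),(0:ℝ),(1:ℝ)) := by
    simp [Prod.ext_iff]
  have hexp13 : f2 X (1/k, 0, m) (0,0,1) = (1/k) * B + m * C := by
    rw [hdir, map_add, map_smul, map_smul]
    simp only [ContinuousLinearMap.add_apply, ContinuousLinearMap.coe_smul',
      Pi.smul_apply, smul_eq_mul]
    rfl
  have hexp11 : f2 X (1/k, 0, m) (1/k, 0, m)
      = (1/k) * ((1/k) * A + m * B') + m * ((1/k) * B + m * C) := by
    rw [hdir, map_add, map_smul, map_smul]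
    simp only [ContinuousLinearMap.add_apply, ContinuousLinearMap.coe_smul',
      Pi.smul_apply, smul_eq_mul, map_add, map_smul]
    rfl
  -- the wave equation at (x₀, y', t₀)
  have hw := hwave x₀ y' t₀
  rw [H33, H13, H11, H22, hexp13, hexp11] at hw
  rw [h33, h11, h22]
  -- final algebra
  rw [← hsymm] at hw
  have h1M' : (1:ℝ) - M₀ ^ 2 ≠ 0 := ne_of_gt h1M
  subst hM
  exact walg u₀ c₀ k m A B C D hc0 hk h1M' hm_def hk2 hw
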